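/- (Proposition on expected change of grit and reachability, discrete-time analog.) For every n : ℕ and every state s ∉ B: (1) the minimum over actions a ∈ A of the expected one-step change of grit, (∑ s', (p s a s').toReal * Γ n s') − Γ (n+1) s, equals 0; in particular this minimum is ≤ 0. (2) For every action a ∈ A, the expected one-step change of reachability satisfies (∑ s', (p s a s').toReal * Λ n s') − Λ (n+1) s ≤ 0, and the maximum of this quantity over actions a ∈ A equals 0. -/
import Mathlib


open scoped BigOperators

/-- Shift of a policy: `(shift π) k = π (k+1)`. -/
def shiftPolicy {S A : Type*} (π : ℕ → S → A) : ℕ → S → A := fun k => π (k + 1)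

/-- Hitting probability of `B` within `n` steps from state `s` under policy `π`:
`h π 0 s = (if s ∈ B then 1 else 0)` and
`h π (n+1) s = (if s ∈ B then 1 else ∑ s', (p s (π 0 s) s').toReal * h (shift π) n s')`. -/
noncomputable def hitProb {S A : Type*} [Fintype S]
    (p : S → A → PMF S) (B : Set S) [DecidablePred (· ∈ B)] :
    (ℕ → S → A) → ℕ → S → ℝ
  | _, 0, s => if s ∈ B then 1 else 0
  | π, n + 1, s =>
      if s ∈ B then 1
      else ∑ s', (p s (π 0 s) s').toReal * hitProb p B (shiftPolicy π) n s'

/-- Grit: the infimum over all policies of the hitting probability of `B`. -/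
noncomputable def grit {S A : Type*} [Fintype S]
    (p : S → A → PMF S) (B : Set S) [DecidablePred (· ∈ B)] (n : ℕ) (s : S) : ℝ :=
  ⨅ π : ℕ → S → A, hitProb p B π n s

/-- Reachability: the supremum over all policies of the hitting probability of `B`. -/
noncomputable def reach {S A : Type*} [Fintype S]
    (p : S → A → PMF S) (B : Set S) [DecidablePred (· ∈ B)] (n : ℕ) (s : S) : ℝ :=
  ⨆ π : ℕ → S → A, hitProb p B π n s

section Aux

variable {S A : Type*} [Fintype S] [Nonempty A]
  (p : S → A → PMF S) (B : Set S) [DecidablePred (· ∈ B)]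

lemma pmf_sum_one (s : S) (a : A) : ∑ s', ((p s a) s').toReal = 1 := by
  have h1 : ∑' s', (p s a) s' = 1 := (p s a).tsum_coe
  rw [tsum_fintype] at h1
  have h2 := ENNReal.toReal_sum (s := Finset.univ) (f := fun s' => (p s a) s')
    (fun s' _ => (p s a).apply_ne_top s')
  rw [h1] at h2
  simpa using h2.symm

lemma hitProb_nonneg : ∀ (n : ℕ) (π : ℕ → S → A) (s : S), 0 ≤ hitProb p B π n s := by
  intro n
  induction n with
  | zero => intro π s; rw [hitProb]; split <;> norm_num
  | succ n ih =>
    intro π s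
    rw [hitProb]
    split
    · norm_num
    · exact Finset.sum_nonneg fun s' _ => mul_nonneg ENNReal.toReal_nonneg (ih _ s')

lemma hitProb_le_one : ∀ (n : ℕ) (π : ℕ → S → A) (s : S), hitProb p B π n s ≤ 1 := by
  intro n
  induction n with
  | zero => intro π s; rw [hitProb]; split <;> norm_num
  | succ n ih =>
    intro π s
    rw [hitProb]
    split
    · exact le_rfl
    · calc ∑ s', ((p s (π 0 s)) s').toReal * hitProb p B (shiftPolicy π) n s'
          ≤ ∑ s', ((p s (π 0 s)) s').toReal * 1 :=
            Finset.sum_le_sum fun s' _ =>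
              mul_le_mul_of_nonneg_left (ih _ s') ENNReal.toReal_nonneg
        _ = 1 := by simp [pmf_sum_one p s]

lemma bddBelow_hitProb (n : ℕ) (s : S) :
    BddBelow (Set.range fun π : ℕ → S → A => hitProb p B π n s) := by
  refine ⟨0, ?_⟩
  rintro x ⟨π, rfl⟩
  exact hitProb_nonneg p B n π s

lemma bddAbove_hitProb (n : ℕ) (s : S) :
    BddAbove (Set.range fun π : ℕ → S → A => hitProb p B π n s) := by
  refine ⟨1, ?_⟩
  rintro x ⟨π, rfl⟩
  exact hitProb_le_one p B n π s

/-- consing an action choice onto a policy -/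
def consPolicy (a : S → A) (π : ℕ → S → A) : ℕ → S → A :=
  fun k => Nat.casesOn k a (fun k' => π k')

lemma shift_cons (a : S → A) (π : ℕ → S → A) : shiftPolicy (consPolicy a π) = π := rfl

variable [Finite A]

/-- Existence of a simultaneously optimal (minimizing) policy. -/
lemma exists_opt_min : ∀ n : ℕ, ∃ π : ℕ → S → A,
    ∀ s σ, hitProb p B π n s ≤ hitProb p B σ n s := by
  intro n
  induction n with
  | zero =>
    refine ⟨Classical.arbitrary _, fun s σ => ?_⟩
    rw [hitProb, hitProb]
  | succ n ih =>
    obtain ⟨π, hπ⟩ := ih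
    have hsel : ∀ s : S, ∃ a : A, ∀ b : A,
        ∑ s', ((p s a) s').toReal * hitProb p B π n s'
          ≤ ∑ s', ((p s b) s').toReal * hitProb p B π n s' := by
      intro s
      obtain ⟨a, ha⟩ := Finite.exists_min
        (fun a : A => ∑ s', ((p s a) s').toReal * hitProb p B π n s')
      exact ⟨a, ha⟩
    choose sel hsel using hsel
    refine ⟨consPolicy sel π, fun s σ => ?_⟩
    rw [hitProb, hitProb]
    split
    · exact le_rfl
    · calc ∑ s', ((p s (consPolicy sel π 0 s)) s').toReal
              * hitProb p B (shiftPolicy (consPolicy sel π)) n s'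
          = ∑ s', ((p s (sel s)) s').toReal * hitProb p B π n s' := by
            rw [shift_cons]; rfl
        _ ≤ ∑ s', ((p s (σ 0 s)) s').toReal * hitProb p B π n s' := hsel s (σ 0 s)
        _ ≤ ∑ s', ((p s (σ 0 s)) s').toReal * hitProb p B (shiftPolicy σ) n s' :=
            Finset.sum_le_sum fun s' _ =>
              mul_le_mul_of_nonneg_left (hπ s' (shiftPolicy σ)) ENNReal.toReal_nonneg

/-- Existence of a simultaneously optimal (maximizing) policy. -/
lemma exists_opt_max : ∀ n : ℕ, ∃ π : ℕ → S → A,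
    ∀ s σ, hitProb p B σ n s ≤ hitProb p B π n s := by
  intro n
  induction n with
  | zero =>
    refine ⟨Classical.arbitrary _, fun s σ => ?_⟩
    rw [hitProb, hitProb]
  | succ n ih =>
    obtain ⟨π, hπ⟩ := ih
    have hsel : ∀ s : S, ∃ a : A, ∀ b : A,
        ∑ s', ((p s b) s').toReal * hitProb p B π n s'
          ≤ ∑ s', ((p s a) s').toReal * hitProb p B π n s' := by
      intro s
      obtain ⟨a, ha⟩ := Finite.exists_max
        (fun a : A => ∑ s', ((p s a) s').toReal * hitProb p B π n s')
      exact ⟨a, ha⟩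
    choose sel hsel using hsel
    refine ⟨consPolicy sel π, fun s σ => ?_⟩
    rw [hitProb, hitProb]
    split
    · exact le_rfl
    · calc ∑ s', ((p s (σ 0 s)) s').toReal * hitProb p B (shiftPolicy σ) n s'
          ≤ ∑ s', ((p s (σ 0 s)) s').toReal * hitProb p B π n s' :=
            Finset.sum_le_sum fun s' _ =>
              mul_le_mul_of_nonneg_left (hπ s' (shiftPolicy σ)) ENNReal.toReal_nonneg
        _ ≤ ∑ s', ((p s (sel s)) s').toReal * hitProb p B π n s' := hsel s (σ 0 s)
        _ = ∑ s', ((p s (consPolicy sel π 0 s)) s').toReal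
              * hitProb p B (shiftPolicy (consPolicy sel π)) n s' := by
            rw [shift_cons]; rfl

lemma grit_eq_opt {n : ℕ} {π : ℕ → S → A}
    (hπ : ∀ s σ, hitProb p B π n s ≤ hitProb p B σ n s) (s : S) :
    grit p B n s = hitProb p B π n s := by
  refine le_antisymm (ciInf_le (bddBelow_hitProb p B n s) π) (le_ciInf fun σ => hπ s σ)

lemma reach_eq_opt {n : ℕ} {π : ℕ → S → A}
    (hπ : ∀ s σ, hitProb p B σ n s ≤ hitProb p B π n s) (s : S) :
    reach p B n s = hitProb p B π n s := by
  refine le_antisymm (ciSup_le fun σ => hπ s σ) (le_ciSup (bddAbove_hitProb p B n s) π)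

/-- Bellman equation for grit. -/
lemma grit_succ (n : ℕ) (s : S) (hs : s ∉ B) :
    grit p B (n + 1) s = ⨅ a : A, ∑ s', ((p s a) s').toReal * grit p B n s' := by
  obtain ⟨π, hπ⟩ := exists_opt_min p B n
  have hg : ∀ s', grit p B n s' = hitProb p B π n s' := grit_eq_opt p B hπ
  have hbdd : BddBelow (Set.range fun a : A =>
      ∑ s', ((p s a) s').toReal * grit p B n s') := (Set.finite_range _).bddBelow
  refine le_antisymm ?_ ?_
  · refine le_ciInf fun a => ?_
    have : grit p B (n + 1) s ≤ hitProb p B (consPolicy (fun _ => a) π) (n + 1) s :=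
      ciInf_le (bddBelow_hitProb p B _ s) _
    refine this.trans_eq ?_
    rw [hitProb, if_neg hs, shift_cons]
    exact Finset.sum_congr rfl fun s' _ => by simp [consPolicy, hg s']
  · refine le_ciInf fun σ => ?_
    calc (⨅ a : A, ∑ s', ((p s a) s').toReal * grit p B n s')
        ≤ ∑ s', ((p s (σ 0 s)) s').toReal * grit p B n s' := ciInf_le hbdd (σ 0 s)
      _ ≤ ∑ s', ((p s (σ 0 s)) s').toReal * hitProb p B (shiftPolicy σ) n s' :=
          Finset.sum_le_sum fun s' _ => mul_le_mul_of_nonneg_left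
            (ciInf_le (bddBelow_hitProb p B n s') (shiftPolicy σ)) ENNReal.toReal_nonneg
      _ = hitProb p B σ (n + 1) s := by rw [hitProb, if_neg hs]

/-- Bellman equation for reach. -/
lemma reach_succ (n : ℕ) (s : S) (hs : s ∉ B) :
    reach p B (n + 1) s = ⨆ a : A, ∑ s', ((p s a) s').toReal * reach p B n s' := by
  obtain ⟨π, hπ⟩ := exists_opt_max p B n
  have hg : ∀ s', reach p B n s' = hitProb p B π n s' := reach_eq_opt p B hπ
  have hbdd : BddAbove (Set.range fun a : A =>
      ∑ s', ((p s a) s').toReal * reach p B n s') := (Set.finite_range _).bddAbove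
  refine le_antisymm ?_ ?_
  · refine ciSup_le fun σ => ?_
    calc hitProb p B σ (n + 1) s
        = ∑ s', ((p s (σ 0 s)) s').toReal * hitProb p B (shiftPolicy σ) n s' := by
          rw [hitProb, if_neg hs]
      _ ≤ ∑ s', ((p s (σ 0 s)) s').toReal * reach p B n s' :=
          Finset.sum_le_sum fun s' _ => mul_le_mul_of_nonneg_left
            (le_ciSup (bddAbove_hitProb p B n s') (shiftPolicy σ)) ENNReal.toReal_nonneg
      _ ≤ ⨆ a : A, ∑ s', ((p s a) s').toReal * reach p B n s' := le_ciSup hbdd (σ 0 s)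
  · refine ciSup_le fun a => ?_
    have h1 : hitProb p B (consPolicy (fun _ => a) π) (n + 1) s ≤ reach p B (n + 1) s :=
      le_ciSup (bddAbove_hitProb p B _ s) _
    refine le_trans (le_of_eq ?_) h1
    rw [hitProb, if_neg hs, shift_cons]
    exact Finset.sum_congr rfl fun s' _ => by simp [consPolicy, hg s']

end Aux

/-- **Expected change of grit and reachability, discrete-time analog.**
For every `n` and every state `s ∉ B`:
(1) the minimum over actions of the expected one-step change of grit,
`(∑ s', (p s a s').toReal * Γ n s') - Γ (n+1) s`, equals `0`; in particular it is `≤ 0`;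
(2) for every action the expected one-step change of reachability is `≤ 0`, and its maximum
over actions equals `0`. -/
theorem expected_change_grit_reach {S A : Type*} [Fintype S] [Nonempty S]
    [Fintype A] [Nonempty A]
    (p : S → A → PMF S) (B : Set S) [DecidablePred (· ∈ B)] :
    ∀ (n : ℕ) (s : S), s ∉ B →
      ((⨅ a : A, ((∑ s', (p s a s').toReal * grit p B n s') - grit p B (n + 1) s)) = 0 ∧
       (⨅ a : A, ((∑ s', (p s a s').toReal * grit p B n s') - grit p B (n + 1) s)) ≤ 0) ∧
      ((∀ a : A, (∑ s', (p s a s').toReal * reach p B n s') - reach p B (n + 1) s ≤ 0) ∧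
       (⨆ a : A, ((∑ s', (p s a s').toReal * reach p B n s') - reach p B (n + 1) s)) = 0) := by
  intro n s hs
  have hG := grit_succ p B n s hs
  have hR := reach_succ p B n s hs
  set g : A → ℝ := fun a => ∑ s', (p s a s').toReal * grit p B n s' with hgdef
  set r : A → ℝ := fun a => ∑ s', (p s a s').toReal * reach p B n s' with hrdef
  obtain ⟨a₀, ha₀⟩ := Finite.exists_min g
  obtain ⟨a₁, ha₁⟩ := Finite.exists_max r
  have hGmin : grit p B (n + 1) s = g a₀ := by
    rw [hG]
    exact le_antisymm (ciInf_le (Set.finite_range _).bddBelow a₀) (le_ciInf ha₀)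
  have hRmax : reach p B (n + 1) s = r a₁ := by
    rw [hR]
    exact le_antisymm (ciSup_le ha₁) (le_ciSup (Set.finite_range _).bddAbove a₁)
  have h1 : (⨅ a : A, (g a - grit p B (n + 1) s)) = 0 := by
    refine le_antisymm ?_ (le_ciInf fun a => ?_)
    · have := ciInf_le (f := fun a : A => g a - grit p B (n + 1) s)
        (Set.finite_range _).bddBelow a₀
      simpa [hGmin] using this
    · rw [hGmin]; linarith [ha₀ a]
  have h2 : ∀ a : A, r a - reach p B (n + 1) s ≤ 0 := by
    intro a; rw [hRmax]; linarith [ha₁ a]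
  have h3 : (⨆ a : A, (r a - reach p B (n + 1) s)) = 0 := by
    refine le_antisymm (ciSup_le h2) ?_
    have := le_ciSup (f := fun a : A => r a - reach p B (n + 1) s)
      (Set.finite_range _).bddAbove a₁
    simpa [hRmax] using this
  exact ⟨⟨h1, h1.le⟩, h2, h3⟩
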